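/- The Efimov transcendental function Λ(m) := (2/π)(m+1)²(1/√(m(m+2)) − arcsin(1/(m+1))), defined for m > 0, is strictly positive and strictly monotone decreasing on (0,∞), is continuous there, and its range is all of (0,∞); consequently, for every t > 0 there exists a unique m > 0 with Λ(m) = t (in particular there is a unique mass m* > 0 with Λ(m*) = 1). -/

import Mathlib

noncomputable section

/-- The Efimov transcendental function
`Λ(m) = (2/π)(m+1)² (1/√(m(m+2)) − arcsin(1/(m+1)))`. -/
def Efimov (m : ℝ) : ℝ :=
  (2 / Real.pi) * (m + 1) ^ 2 *
    (1 / Real.sqrt (m * (m + 2)) - Real.arcsin (1 / (m + 1)))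

namespace EfimovAux

open Real Set Filter

/-- `N x = x/√(1-x²) - arcsin x`. -/
def N (x : ℝ) : ℝ := x / Real.sqrt (1 - x ^ 2) - Real.arcsin x

/-- `G x = (2/π) N x / x²`; one has `Efimov m = G (1/(m+1))`. -/
def G (x : ℝ) : ℝ := (2 / Real.pi) * (N x / x ^ 2)

/-- `P x = x³/(1-x²)^{3/2} - 2 N x`. -/
def P (x : ℝ) : ℝ := x ^ 3 / (Real.sqrt (1 - x ^ 2)) ^ 3 - 2 * N x

lemma one_sub_sq_pos {x : ℝ} (hx0 : 0 ≤ x) (hx1 : x < 1) : 0 < 1 - x ^ 2 := by nlinarith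

lemma u_pos {x : ℝ} (hx0 : 0 ≤ x) (hx1 : x < 1) : 0 < Real.sqrt (1 - x ^ 2) :=
  Real.sqrt_pos.2 (one_sub_sq_pos hx0 hx1)

lemma hasDerivAt_u {x : ℝ} (h : 1 - x ^ 2 ≠ 0) :
    HasDerivAt (fun y : ℝ => Real.sqrt (1 - y ^ 2)) (-x / Real.sqrt (1 - x ^ 2)) x := by
  have h1 : HasDerivAt (fun y : ℝ => 1 - y ^ 2) (-(2 * x)) x := by
    simpa using ((hasDerivAt_pow 2 x).const_sub 1)
  have h2 := (Real.hasDerivAt_sqrt h).comp x h1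
  refine h2.congr_deriv (Eq.symm ?_)
  field_simp

lemma hasDerivAt_N {x : ℝ} (hx0 : 0 < x) (hx1 : x < 1) :
    HasDerivAt N (x ^ 2 / (Real.sqrt (1 - x ^ 2)) ^ 3) x := by
  have h0 : 0 < 1 - x ^ 2 := one_sub_sq_pos hx0.le hx1
  have hu : 0 < Real.sqrt (1 - x ^ 2) := Real.sqrt_pos.2 h0
  have hd : HasDerivAt (fun y : ℝ => y / Real.sqrt (1 - y ^ 2))
      ((1 * Real.sqrt (1 - x ^ 2) - x * (-x / Real.sqrt (1 - x ^ 2))) /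
        (Real.sqrt (1 - x ^ 2)) ^ 2) x :=
    (hasDerivAt_id x).div (hasDerivAt_u h0.ne') hu.ne'
  have ha : HasDerivAt Real.arcsin (1 / Real.sqrt (1 - x ^ 2)) x :=
    Real.hasDerivAt_arcsin (by linarith) hx1.ne
  have := hd.sub ha
  have hu2 : Real.sqrt (1 - x ^ 2) ^ 2 = 1 - x ^ 2 := Real.sq_sqrt h0.le
  refine this.congr_deriv (Eq.symm ?_)
  field_simp
  ring

lemma hasDerivAt_P {x : ℝ} (hx0 : 0 < x) (hx1 : x < 1) :
    HasDerivAt P (x ^ 2 / (Real.sqrt (1 - x ^ 2)) ^ 3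
      + 3 * x ^ 4 / (Real.sqrt (1 - x ^ 2)) ^ 5) x := by
  have h0 : 0 < 1 - x ^ 2 := one_sub_sq_pos hx0.le hx1
  have hu : 0 < Real.sqrt (1 - x ^ 2) := Real.sqrt_pos.2 h0
  have hden : HasDerivAt (fun y : ℝ => (Real.sqrt (1 - y ^ 2)) ^ 3)
      (3 * (Real.sqrt (1 - x ^ 2)) ^ 2 * (-x / Real.sqrt (1 - x ^ 2))) x := by
    simpa [Pi.pow_def] using (hasDerivAt_u h0.ne').pow 3
  have hQ : HasDerivAt (fun y : ℝ => y ^ 3 / (Real.sqrt (1 - y ^ 2)) ^ 3)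
      ((3 * x ^ 2 * (Real.sqrt (1 - x ^ 2)) ^ 3 -
        x ^ 3 * (3 * (Real.sqrt (1 - x ^ 2)) ^ 2 * (-x / Real.sqrt (1 - x ^ 2)))) /
          ((Real.sqrt (1 - x ^ 2)) ^ 3) ^ 2) x := by
    have := (hasDerivAt_pow 3 x).div hden (pow_ne_zero 3 hu.ne')
    simpa [Pi.div_def, Pi.pow_def] using this
  have := hQ.sub ((hasDerivAt_N hx0 hx1).const_mul 2)
  have hu2 : Real.sqrt (1 - x ^ 2) ^ 2 = 1 - x ^ 2 := Real.sq_sqrt h0.le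
  refine this.congr_deriv (Eq.symm ?_)
  field_simp
  ring

lemma continuousOn_N : ContinuousOn N (Set.Ico (0 : ℝ) 1) := by
  apply ContinuousOn.sub
  · apply ContinuousOn.div continuousOn_id
      ((Real.continuous_sqrt.comp (by continuity)).continuousOn)
    intro x hx
    exact (u_pos hx.1 hx.2).ne'
  · exact Real.continuous_arcsin.continuousOn

lemma N_zero : N 0 = 0 := by simp [N]

lemma N_pos {x : ℝ} (hx0 : 0 < x) (hx1 : x < 1) : 0 < N x := by
  have hmono : StrictMonoOn N (Set.Ico (0 : ℝ) 1) := by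
    apply strictMonoOn_of_deriv_pos (convex_Ico 0 1) continuousOn_N
    intro y hy
    rw [interior_Ico] at hy
    rw [(hasDerivAt_N hy.1 hy.2).deriv]
    have hu := u_pos hy.1.le hy.2
    exact div_pos (pow_pos hy.1 2) (pow_pos hu 3)
  have := hmono (by constructor <;> norm_num) ⟨hx0.le, hx1⟩ hx0
  rwa [N_zero] at this

lemma continuousOn_P : ContinuousOn P (Set.Ico (0 : ℝ) 1) := by
  apply ContinuousOn.sub
  · apply ContinuousOn.div (continuousOn_pow 3)
      (((Real.continuous_sqrt.comp (by continuity)).pow 3).continuousOn)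
    intro x hx
    exact pow_ne_zero 3 (u_pos hx.1 hx.2).ne'
  · exact continuousOn_const.mul continuousOn_N

lemma P_zero : P 0 = 0 := by simp [P, N_zero]

lemma P_pos {x : ℝ} (hx0 : 0 < x) (hx1 : x < 1) : 0 < P x := by
  have hmono : StrictMonoOn P (Set.Ico (0 : ℝ) 1) := by
    apply strictMonoOn_of_deriv_pos (convex_Ico 0 1) continuousOn_P
    intro y hy
    rw [interior_Ico] at hy
    rw [(hasDerivAt_P hy.1 hy.2).deriv]
    have hu := u_pos hy.1.le hy.2
    have h1 : 0 < y ^ 2 / Real.sqrt (1 - y ^ 2) ^ 3 := div_pos (pow_pos hy.1 2) (pow_pos hu 3)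
    have h2 : 0 < 3 * y ^ 4 / Real.sqrt (1 - y ^ 2) ^ 5 :=
      div_pos (mul_pos (by norm_num) (pow_pos hy.1 4)) (pow_pos hu 5)
    linarith
  have := hmono (by constructor <;> norm_num) ⟨hx0.le, hx1⟩ hx0
  rwa [P_zero] at this

lemma hasDerivAt_G {x : ℝ} (hx0 : 0 < x) (hx1 : x < 1) :
    HasDerivAt G ((2 / Real.pi) * (P x / x ^ 3)) x := by
  have hu : 0 < Real.sqrt (1 - x ^ 2) := u_pos hx0.le hx1
  have hd : HasDerivAt (fun y : ℝ => N y / y ^ 2)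
      ((x ^ 2 / (Real.sqrt (1 - x ^ 2)) ^ 3 * x ^ 2 - N x * (2 * x)) / (x ^ 2) ^ 2) x := by
    have := (hasDerivAt_N hx0 hx1).div (hasDerivAt_pow 2 x) (pow_ne_zero 2 hx0.ne')
    simpa [Pi.div_def] using this
  have := hd.const_mul (2 / Real.pi)
  refine this.congr_deriv (Eq.symm ?_)
  rw [P]
  field_simp

lemma continuousOn_G : ContinuousOn G (Set.Ioo (0 : ℝ) 1) := by
  apply ContinuousOn.mul continuousOn_const
  apply ContinuousOn.div (continuousOn_N.mono (fun x hx => ⟨hx.1.le, hx.2⟩))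
    (continuousOn_pow 2)
  intro x hx
  exact pow_ne_zero 2 hx.1.ne'

lemma strictMonoOn_G : StrictMonoOn G (Set.Ioo (0 : ℝ) 1) := by
  apply strictMonoOn_of_deriv_pos (convex_Ioo 0 1) continuousOn_G
  intro y hy
  rw [interior_Ioo] at hy
  rw [(hasDerivAt_G hy.1 hy.2).deriv]
  have hP := P_pos hy.1 hy.2
  have hpi := Real.pi_pos
  exact mul_pos (by positivity) (div_pos hP (pow_pos hy.1 3))

lemma G_pos {x : ℝ} (hx0 : 0 < x) (hx1 : x < 1) : 0 < G x := by
  have hpi := Real.pi_pos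
  have hN := N_pos hx0 hx1
  rw [G]
  exact mul_pos (by positivity) (div_pos hN (pow_pos hx0 2))

lemma efimov_eq {m : ℝ} (hm : 0 < m) : Efimov m = G (1 / (m + 1)) := by
  have hm1 : (0 : ℝ) < m + 1 := by linarith
  have hmm : (0 : ℝ) < m * (m + 2) := by nlinarith
  have h2 : 1 - (1 / (m + 1)) ^ 2 = m * (m + 2) * ((m + 1)⁻¹) ^ 2 := by
    field_simp; ring
  have h3 : Real.sqrt (1 - (1 / (m + 1)) ^ 2) = Real.sqrt (m * (m + 2)) * (m + 1)⁻¹ := by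
    rw [h2, show ((m + 1)⁻¹) ^ 2 = ((m+1)⁻¹) ^ 2 from rfl, Real.sqrt_mul hmm.le,
      Real.sqrt_sq (by positivity)]
  have hs : 0 < Real.sqrt (m * (m + 2)) := Real.sqrt_pos.2 hmm
  rw [Efimov, G, N, h3]
  field_simp

lemma one_div_mem {m : ℝ} (hm : 0 < m) : 1 / (m + 1) ∈ Set.Ioo (0 : ℝ) 1 := by
  constructor
  · positivity
  · rw [div_lt_one (by linarith)]; linarith

lemma tendsto_G_zero : Tendsto G (nhdsWithin 0 (Set.Ioi 0)) (nhds 0) := by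
  have hpi := Real.pi_pos
  set h : ℝ → ℝ := fun x => (2 / Real.pi) * (x / (2 * (Real.sqrt (1 - x ^ 2)) ^ 3)) with hh
  have hcont : ContinuousAt h 0 := by
    apply ContinuousAt.mul continuousAt_const
    apply ContinuousAt.div continuousAt_id
    · exact (continuousAt_const.mul (((Real.continuous_sqrt.comp
        (by continuity)).pow 3).continuousAt))
    · simp
  have htend : Tendsto h (nhdsWithin 0 (Set.Ioi 0)) (nhds 0) := by
    have := hcont.tendsto.mono_left (nhdsWithin_le_nhds (s := Set.Ioi (0:ℝ)))
    have h0 : h 0 = 0 := by simp [hh]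
    rwa [h0] at this
  apply tendsto_of_tendsto_of_tendsto_of_le_of_le' tendsto_const_nhds htend
  · filter_upwards [Ioo_mem_nhdsGT_of_mem (Set.mem_Ico.2 ⟨le_refl (0:ℝ), one_pos⟩)]
      with x hx
    exact (G_pos hx.1 hx.2).le
  · filter_upwards [Ioo_mem_nhdsGT_of_mem (Set.mem_Ico.2 ⟨le_refl (0:ℝ), one_pos⟩)]
      with x hx
    have hu := u_pos hx.1.le hx.2
    have hP := P_pos hx.1 hx.2
    have hN2 : 2 * N x ≤ x ^ 3 / (Real.sqrt (1 - x ^ 2)) ^ 3 := by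
      have := hP; rw [P] at this; linarith
    have hNel : N x / x ^ 2 ≤ x / (2 * (Real.sqrt (1 - x ^ 2)) ^ 3) := by
      rw [div_le_div_iff₀ (pow_pos hx.1 2) (by positivity)]
      calc N x * (2 * Real.sqrt (1 - x ^ 2) ^ 3)
          = (2 * N x) * Real.sqrt (1 - x ^ 2) ^ 3 := by ring
        _ ≤ (x ^ 3 / (Real.sqrt (1 - x ^ 2)) ^ 3) * Real.sqrt (1 - x ^ 2) ^ 3 := by
            apply mul_le_mul_of_nonneg_right hN2 (by positivity)
        _ = x ^ 3 := by field_simp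
        _ = x * x ^ 2 := by ring
    rw [G, hh]
    exact mul_le_mul_of_nonneg_left hNel (by positivity)

lemma tendsto_G_one : Tendsto G (nhdsWithin 1 (Set.Iio 1)) atTop := by
  have hpi := Real.pi_pos
  have hmem : Set.Ioo (0:ℝ) 1 ∈ nhdsWithin (1:ℝ) (Set.Iio 1) :=
    Ioo_mem_nhdsLT_of_mem (Set.mem_Ioc.2 ⟨one_pos, le_refl 1⟩)
  have h1 : Tendsto (fun x : ℝ => Real.sqrt (1 - x ^ 2))
      (nhdsWithin 1 (Set.Iio 1)) (nhdsWithin 0 (Set.Ioi 0)) := by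
    apply tendsto_nhdsWithin_of_tendsto_nhds_of_eventually_within
    · have : Tendsto (fun x : ℝ => Real.sqrt (1 - x ^ 2)) (nhds 1)
          (nhds (Real.sqrt (1 - 1 ^ 2))) :=
        ((Real.continuous_sqrt.comp (by continuity)).tendsto 1)
      simpa using this.mono_left (nhdsWithin_le_nhds)
    · filter_upwards [hmem] with x hx
      exact u_pos hx.1.le hx.2
  have h2 : Tendsto (fun x : ℝ => (Real.sqrt (1 - x ^ 2))⁻¹)
      (nhdsWithin 1 (Set.Iio 1)) atTop := tendsto_inv_nhdsGT_zero.comp h1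
  have h3 : Tendsto (fun x : ℝ => x * (Real.sqrt (1 - x ^ 2))⁻¹)
      (nhdsWithin 1 (Set.Iio 1)) atTop := by
    apply Filter.Tendsto.pos_mul_atTop one_pos _ h2
    exact (continuous_id.tendsto 1).mono_left nhdsWithin_le_nhds
  have h4 : Tendsto (fun x : ℝ => x * (Real.sqrt (1 - x ^ 2))⁻¹ + -(Real.pi / 2))
      (nhdsWithin 1 (Set.Iio 1)) atTop := tendsto_atTop_add_const_right _ _ h3
  have h5 : Tendsto (fun x : ℝ =>
      (2 / Real.pi) * (x * (Real.sqrt (1 - x ^ 2))⁻¹ + -(Real.pi / 2)))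
      (nhdsWithin 1 (Set.Iio 1)) atTop :=
    Filter.Tendsto.const_mul_atTop (by positivity) h4
  apply tendsto_atTop_mono' _ _ h5
  filter_upwards [hmem] with x hx
  have hu := u_pos hx.1.le hx.2
  have hN : x * (Real.sqrt (1 - x ^ 2))⁻¹ + -(Real.pi / 2) ≤ N x := by
    rw [N]
    simp only [div_eq_mul_inv]
    have := Real.arcsin_le_pi_div_two x
    linarith
  have hNpos := N_pos hx.1 hx.2
  have hNG : N x ≤ N x / x ^ 2 := by
    rw [le_div_iff₀ (pow_pos hx.1 2)]
    have hx2 : x ^ 2 ≤ 1 := by nlinarith [hx.1.le, hx.2.le]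
    nlinarith [hNpos, hx2]
  rw [G]
  have : x * (Real.sqrt (1 - x ^ 2))⁻¹ + -(Real.pi / 2) ≤ N x / x ^ 2 := le_trans hN hNG
  exact mul_le_mul_of_nonneg_left this (by positivity)

lemma exists_G_eq {t : ℝ} (ht : 0 < t) : ∃ x ∈ Set.Ioo (0 : ℝ) 1, G x = t := by
  have hmem0 : Set.Ioo (0:ℝ) 1 ∈ nhdsWithin (0:ℝ) (Set.Ioi 0) :=
    Ioo_mem_nhdsGT_of_mem (Set.mem_Ico.2 ⟨le_refl (0:ℝ), one_pos⟩)
  have hmem1 : Set.Ioo (0:ℝ) 1 ∈ nhdsWithin (1:ℝ) (Set.Iio 1) :=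
    Ioo_mem_nhdsLT_of_mem (Set.mem_Ioc.2 ⟨one_pos, le_refl 1⟩)
  obtain ⟨a, ha, hat⟩ : ∃ a, a ∈ Set.Ioo (0:ℝ) 1 ∧ G a < t := by
    have h1 : ∀ᶠ x in nhdsWithin (0:ℝ) (Set.Ioi 0), G x < t :=
      tendsto_G_zero.eventually (Filter.Tendsto.eventually_lt_const ht tendsto_id)
    exact ((Filter.eventually_of_mem hmem0 (fun x hx => hx)).and h1).exists.imp (fun x h => ⟨h.1, h.2⟩)
  obtain ⟨b, hb, hbt⟩ : ∃ b, b ∈ Set.Ioo (0:ℝ) 1 ∧ t < G b := by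
    have h1 : ∀ᶠ x in nhdsWithin (1:ℝ) (Set.Iio 1), t < G x :=
      tendsto_G_one.eventually_gt_atTop t
    exact ((Filter.eventually_of_mem hmem1 (fun x hx => hx)).and h1).exists.imp (fun x h => ⟨h.1, h.2⟩)
  have hab : a < b := by
    rcases lt_trichotomy a b with h | h | h
    · exact h
    · exfalso; rw [h] at hat; linarith
    · exfalso; have := strictMonoOn_G hb ha h; linarith
  have hsub : Set.Icc a b ⊆ Set.Ioo (0:ℝ) 1 := fun x hx =>
    ⟨lt_of_lt_of_le ha.1 hx.1, lt_of_le_of_lt hx.2 hb.2⟩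
  have := intermediate_value_Icc hab.le (continuousOn_G.mono hsub)
  obtain ⟨x, hx, hxt⟩ := this ⟨hat.le, hbt.le⟩
  exact ⟨x, hsub hx, hxt⟩

end EfimovAux

open EfimovAux in
/-- The Efimov transcendental function is strictly positive, strictly monotone
decreasing, and continuous on `(0, ∞)`, with range all of `(0, ∞)`; consequently
for every `t > 0` there is a unique `m > 0` with `Λ(m) = t` (in particular a
unique `m* > 0` with `Λ(m*) = 1`). -/
theorem efimov_properties :
    (∀ m ∈ Set.Ioi (0 : ℝ), 0 < Efimov m) ∧
    StrictAntiOn Efimov (Set.Ioi (0 : ℝ)) ∧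
    ContinuousOn Efimov (Set.Ioi (0 : ℝ)) ∧
    Efimov '' Set.Ioi (0 : ℝ) = Set.Ioi (0 : ℝ) ∧
    (∀ t : ℝ, 0 < t → ∃! m : ℝ, 0 < m ∧ Efimov m = t) := by
  have hpos : ∀ m ∈ Set.Ioi (0 : ℝ), 0 < Efimov m := by
    intro m hm
    rw [efimov_eq hm]
    exact G_pos (one_div_mem hm).1 (one_div_mem hm).2
  have hanti : StrictAntiOn Efimov (Set.Ioi (0 : ℝ)) := by
    intro a ha b hb hab
    rw [efimov_eq ha, efimov_eq hb]
    apply strictMonoOn_G (one_div_mem hb) (one_div_mem ha)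
    apply one_div_lt_one_div_of_lt (by linarith [Set.mem_Ioi.1 ha]) (by linarith)
  have hcont : ContinuousOn Efimov (Set.Ioi (0 : ℝ)) := by
    apply ContinuousOn.mul
    · exact (continuousOn_const.mul (by fun_prop))
    · apply ContinuousOn.sub
      · apply ContinuousOn.div continuousOn_const
          ((Real.continuous_sqrt.comp (by continuity)).continuousOn)
        intro m hm
        have hm' : (0:ℝ) < m := hm
        have hmm : (0:ℝ) < m * (m + 2) := by nlinarith
        simpa using (Real.sqrt_pos.2 hmm).ne'
      · apply Real.continuous_arcsin.comp_continuousOn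
        apply ContinuousOn.div continuousOn_const (by fun_prop)
        intro m hm
        have hm' : (0:ℝ) < m := hm
        positivity
  have hexist : ∀ t : ℝ, 0 < t → ∃ m : ℝ, 0 < m ∧ Efimov m = t := by
    intro t ht
    obtain ⟨x, hx, hxt⟩ := exists_G_eq ht
    refine ⟨x⁻¹ - 1, ?_, ?_⟩
    · have : 1 < x⁻¹ := (one_lt_inv_iff₀).2 ⟨hx.1, hx.2⟩
      linarith
    · have hm : (0:ℝ) < x⁻¹ - 1 := by
        have : 1 < x⁻¹ := (one_lt_inv_iff₀).2 ⟨hx.1, hx.2⟩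
        linarith
      rw [efimov_eq hm]
      have : 1 / (x⁻¹ - 1 + 1) = x := by
        rw [sub_add_cancel, one_div, inv_inv]
      rw [this, hxt]
  refine ⟨hpos, hanti, hcont, ?_, ?_⟩
  · ext t
    constructor
    · rintro ⟨m, hm, rfl⟩
      exact hpos m hm
    · intro ht
      obtain ⟨m, hm, hmt⟩ := hexist t ht
      exact ⟨m, hm, hmt⟩
  · intro t ht
    obtain ⟨m, hm, hmt⟩ := hexist t ht
    refine ⟨m, ⟨hm, hmt⟩, ?_⟩
    rintro y ⟨hy, hyt⟩
    exact hanti.injOn hy hm (by rw [hyt, hmt])
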